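/- An m×n reduced matrix over the polynomial ring K[x₁,…,xₙ] (entry (s,t) being a polynomial in x_t alone) has rank equal to min(m,n); that is, reduced matrices have full rank. -/

import Mathlib

set_option maxHeartbeats 1000000

open MvPolynomial

lemma coeff_aeval_X' {K : Type*} [CommSemiring K] {n : ℕ} (i : Fin n) (f : Polynomial K)
    (c : Fin n →₀ ℕ) :
    MvPolynomial.coeff c (Polynomial.aeval (MvPolynomial.X i : MvPolynomial (Fin n) K) f) =
      if c = Finsupp.single i (c i) then f.coeff (c i) else 0 := by
  induction f using Polynomial.induction_on' with
  | add p q hp hq =>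
    simp only [map_add, MvPolynomial.coeff_add, hp, hq, Polynomial.coeff_add]
    split <;> simp
  | monomial e a =>
    rw [Polynomial.aeval_monomial]
    have : algebraMap K (MvPolynomial (Fin n) K) a = C a := rfl
    rw [this, coeff_C_mul, coeff_X_pow, Polynomial.coeff_monomial]
    by_cases h : Finsupp.single i e = c
    · subst h
      simp [Finsupp.single_apply]
    · rw [if_neg h, mul_zero]
      split
      · rename_i hc
        rw [if_neg]
        intro he
        exact h (by rw [hc, he])
      · rfl

lemma support_aeval_X' {K : Type*} [CommSemiring K] {n : ℕ} (i : Fin n) (f : Polynomial K)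
    {c : Fin n →₀ ℕ}
    (hc : c ∈ (Polynomial.aeval (MvPolynomial.X i : MvPolynomial (Fin n) K) f).support) :
    c = Finsupp.single i (c i) := by
  by_contra h
  rw [MvPolynomial.mem_support_iff, coeff_aeval_X', if_neg h] at hc
  exact hc rfl

lemma support_prod_aeval_X' {K : Type*} [CommSemiring K] {n : ℕ} {ι : Type*} [DecidableEq ι]
    (e : ι → Fin n) (f : ι → Polynomial K) (s : Finset ι) :
    ∀ c ∈ (∏ u ∈ s, Polynomial.aeval (MvPolynomial.X (e u) : MvPolynomial (Fin n) K)
      (f u)).support, ∀ j : Fin n, j ∉ s.image e → c j = 0 := by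
  classical
  induction s using Finset.induction_on with
  | empty =>
    intro c hc j _
    simp only [Finset.prod_empty] at hc
    have : c = 0 := by
      by_contra h
      rw [MvPolynomial.mem_support_iff] at hc
      rw [MvPolynomial.coeff_one, if_neg (Ne.symm h)] at hc
      exact hc rfl
    simp [this]
  | @insert u₀ s hu₀ ih =>
    intro c hc j hj
    rw [Finset.prod_insert hu₀] at hc
    have := MvPolynomial.support_mul _ _ hc
    rw [Finset.mem_add] at this
    obtain ⟨c₁, hc₁, c₂, hc₂, rfl⟩ := this
    have h1 : c₁ = Finsupp.single (e u₀) (c₁ (e u₀)) := support_aeval_X' _ _ hc₁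
    have hj1 : j ∉ s.image e := fun h => hj (Finset.image_subset_image (Finset.subset_insert u₀ s) h)
    have hj0 : j ≠ e u₀ := by
      intro h
      exact hj (by rw [h]; exact Finset.mem_image_of_mem e (Finset.mem_insert_self u₀ s))
    have : c₁ j = 0 := by
      rw [h1, Finsupp.single_apply, if_neg (fun h => hj0 h.symm)]
    rw [Finsupp.add_apply, this, ih c₂ hc₂ j hj1, add_zero]

lemma coeff_prod_aeval_X' {K : Type*} [CommSemiring K] {n : ℕ} {ι : Type*} [DecidableEq ι]
    (e : ι → Fin n) (he : Function.Injective e) (f : ι → Polynomial K) (a : ι → ℕ)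
    (s : Finset ι) :
    MvPolynomial.coeff (∑ u ∈ s, Finsupp.single (e u) (a u))
      (∏ u ∈ s, Polynomial.aeval (MvPolynomial.X (e u) : MvPolynomial (Fin n) K) (f u)) =
    ∏ u ∈ s, (f u).coeff (a u) := by
  classical
  induction s using Finset.induction_on with
  | empty => simp
  | @insert u₀ s hu₀ ih =>
    rw [Finset.prod_insert hu₀, Finset.sum_insert hu₀, Finset.prod_insert hu₀]
    set μs := ∑ u ∈ s, Finsupp.single (e u) (a u) with hμs
    have hμs0 : μs (e u₀) = 0 := by
      rw [hμs, Finsupp.finset_sum_apply]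
      refine Finset.sum_eq_zero fun u hu => ?_
      rw [Finsupp.single_apply, if_neg]
      exact fun h => hu₀ (he h ▸ hu)
    rw [MvPolynomial.coeff_mul]
    rw [Finset.sum_eq_single_of_mem (Finsupp.single (e u₀) (a u₀), μs)
      (Finset.HasAntidiagonal.mem_antidiagonal.mpr rfl)]
    · rw [ih, coeff_aeval_X']
      simp [Finsupp.single_apply]
    · rintro ⟨c₁, c₂⟩ hmem hne
      rw [Finset.HasAntidiagonal.mem_antidiagonal] at hmem
      by_cases h1 : c₁ ∈ (Polynomial.aeval (MvPolynomial.X (e u₀) :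
          MvPolynomial (Fin n) K) (f u₀)).support
      · by_cases h2 : c₂ ∈ (∏ u ∈ s, Polynomial.aeval (MvPolynomial.X (e u) :
            MvPolynomial (Fin n) K) (f u)).support
        · exfalso
          have hc1 : c₁ = Finsupp.single (e u₀) (c₁ (e u₀)) := support_aeval_X' _ _ h1
          have hc2 : c₂ (e u₀) = 0 := support_prod_aeval_X' e f s c₂ h2 (e u₀)
            (by simp only [Finset.mem_image]; rintro ⟨u, hu, hh⟩; exact hu₀ (he hh ▸ hu))
          have hval : c₁ (e u₀) = a u₀ := by
            have := congrArg (fun c : Fin n →₀ ℕ => c (e u₀)) hmem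
            simpa [hc2, hμs0, Finsupp.single_apply] using this
          have hc1' : c₁ = Finsupp.single (e u₀) (a u₀) := by rw [hc1, hval]
          have hc2' : c₂ = μs := by
            have := hmem
            rw [hc1'] at this
            exact add_left_cancel this
          exact hne (by rw [hc1', hc2'])
        · rw [MvPolynomial.notMem_support_iff] at h2
          rw [h2, mul_zero]
      · rw [MvPolynomial.notMem_support_iff] at h1
        rw [h1, zero_mul]

lemma perm_exists_lt' {r : ℕ} (σ : Equiv.Perm (Fin r)) (hσ : σ ≠ 1) :
    ∃ t : Fin r, (t : ℕ) < (σ t : ℕ) := by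
  classical
  have hne : (Finset.univ.filter fun t : Fin r => σ t ≠ t).Nonempty := by
    by_contra h
    rw [Finset.not_nonempty_iff_eq_empty, Finset.filter_eq_empty_iff] at h
    exact hσ (Equiv.ext fun t => not_not.mp (h (Finset.mem_univ t)))
  set S := Finset.univ.filter fun t : Fin r => σ t ≠ t
  obtain ⟨t₀, ht₀S, ht₀min⟩ := S.exists_min_image id hne
  have hfix : σ t₀ ≠ t₀ := (Finset.mem_filter.mp ht₀S).2
  refine ⟨t₀, ?_⟩
  rcases lt_trichotomy (σ t₀) t₀ with h | h | h
  · exfalso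
    have hnotmem : σ t₀ ∉ S := fun hmem => absurd (ht₀min _ hmem) (not_le.mpr h)
    have : σ (σ t₀) = σ t₀ :=
      not_not.mp fun hh => hnotmem (Finset.mem_filter.mpr ⟨Finset.mem_univ _, hh⟩)
    exact hfix (σ.injective this)
  · exact absurd h hfix
  · exact h

/-- An `m × n` matrix `(d s t)` whose `(s,t)` entry is a univariate polynomial in
the variable `x_t` is *reduced* if for each diagonal position `s = t` (with
`s < min m n`), `d s s ≠ 0` and `deg(d s s) > deg(d k s)` for all `k > s`
(with `deg 0 = -∞`). -/
def IsReducedMat {K : Type*} [Field K] {m n : ℕ}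
    (d : Fin m → Fin n → Polynomial K) : Prop :=
  ∀ (s : Fin m) (t : Fin n), (s : ℕ) = (t : ℕ) →
    d s t ≠ 0 ∧ ∀ k : Fin m, (s : ℕ) < (k : ℕ) → (d k t).degree < (d s t).degree

/-- A reduced `m × n` matrix over `K[x₁,…,xₙ]` (entry `(s,t)` being a polynomial in
`x_t` alone, viewed in `K[x₁,…,xₙ]` via `x ↦ x_t`) has full rank `min m n`,
the rank being computed over the field of rational functions. -/
theorem stmt8 (K : Type*) [Field K] (m n : ℕ)
    (d : Fin m → Fin n → Polynomial K) (hred : IsReducedMat d) :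
    (Matrix.of fun (s : Fin m) (t : Fin n) =>
        algebraMap (MvPolynomial (Fin n) K) (FractionRing (MvPolynomial (Fin n) K))
          (Polynomial.aeval (MvPolynomial.X t) (d s t))).rank = min m n := by
  classical
  set R := MvPolynomial (Fin n) K with hR
  set F := FractionRing R with hF
  set φ := algebraMap R F with hφ
  set A := (Matrix.of fun (s : Fin m) (t : Fin n) =>
      φ (Polynomial.aeval (MvPolynomial.X t) (d s t))) with hA
  have hrm : min m n ≤ m := min_le_left _ _
  have hrn : min m n ≤ n := min_le_right _ _
  set em : Fin (min m n) → Fin m := Fin.castLE hrm with hem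
  set en : Fin (min m n) → Fin n := Fin.castLE hrn with hen
  have hen_inj : Function.Injective en := Fin.castLE_injective hrn
  set M : Matrix (Fin (min m n)) (Fin (min m n)) R := Matrix.of fun s t =>
      Polynomial.aeval (MvPolynomial.X (en t)) (d (em s) (en t)) with hM
  have hd0 : ∀ t : Fin (min m n), d (em t) (en t) ≠ 0 := fun t => (hred (em t) (en t) rfl).1
  set a : Fin (min m n) → ℕ := fun t => (d (em t) (en t)).natDegree with ha
  set μ : Fin n →₀ ℕ := ∑ t, Finsupp.single (en t) (a t) with hμ
  -- the key coefficient computation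
  have hcoeff : MvPolynomial.coeff μ M.det = ∏ t, (d (em t) (en t)).leadingCoeff := by
    rw [Matrix.det_apply', MvPolynomial.coeff_sum]
    have hterm : ∀ σ : Equiv.Perm (Fin (min m n)),
        MvPolynomial.coeff μ ((↑(Equiv.Perm.sign σ) : R) * ∏ i, M (σ i) i) =
          ((Equiv.Perm.sign σ : ℤ) : K) * ∏ u, (d (em (σ u)) (en u)).coeff (a u) := by
      intro σ
      have h1 : ((↑(Equiv.Perm.sign σ) : ℤ) : R) = C (((Equiv.Perm.sign σ : ℤ) : K)) :=
        (map_intCast (MvPolynomial.C : K →+* R) _).symm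
      rw [h1, MvPolynomial.coeff_C_mul]
      congr 1
      exact coeff_prod_aeval_X' en hen_inj (fun u => d (em (σ u)) (en u)) a Finset.univ
    rw [Finset.sum_eq_single_of_mem (1 : Equiv.Perm (Fin (min m n))) (Finset.mem_univ _)]
    · rw [hterm 1]
      simp only [map_one, Units.val_one, Int.cast_one, one_mul, Equiv.Perm.one_apply]
      exact Finset.prod_congr rfl fun t _ => rfl
    · intro σ _ hσ
      rw [hterm σ]
      obtain ⟨t₀, ht₀⟩ := perm_exists_lt' σ hσ
      have hdeg : (d (em (σ t₀)) (en t₀)).degree < (d (em t₀) (en t₀)).degree := by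
        refine (hred (em t₀) (en t₀) rfl).2 (em (σ t₀)) ?_
        simpa [hem] using ht₀
      have hzero : (d (em (σ t₀)) (en t₀)).coeff (a t₀) = 0 := by
        apply Polynomial.coeff_eq_zero_of_degree_lt
        calc (d (em (σ t₀)) (en t₀)).degree < (d (em t₀) (en t₀)).degree := hdeg
        _ = ((a t₀ : ℕ) : WithBot ℕ) := Polynomial.degree_eq_natDegree (hd0 t₀)
      rw [Finset.prod_eq_zero (Finset.mem_univ t₀) hzero, mul_zero]
  have hlc : (∏ t, (d (em t) (en t)).leadingCoeff) ≠ 0 :=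
    Finset.prod_ne_zero_iff.mpr fun t _ => Polynomial.leadingCoeff_ne_zero.mpr (hd0 t)
  have hMdet : M.det ≠ 0 := by
    intro h
    rw [h, MvPolynomial.coeff_zero] at hcoeff
    exact hlc hcoeff.symm
  -- transfer to the fraction field
  have hsub : A.submatrix em en = M.map φ := by
    ext s t
    rfl
  have hdet' : (A.submatrix em en).det ≠ 0 := by
    rw [hsub]
    have : (M.map φ).det = φ M.det := (RingHom.map_det φ M).symm
    rw [this]
    exact (map_ne_zero_iff φ (IsFractionRing.injective R F)).mpr hMdet
  have hrank_sub : (A.submatrix em en).rank = min m n := by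
    rw [Matrix.rank_of_isUnit _ ((Matrix.isUnit_iff_isUnit_det _).mpr
      (isUnit_iff_ne_zero.mpr hdet'))]
    simp
  have hfactor : A.submatrix em en =
      ((1 : Matrix (Fin m) (Fin m) F).submatrix em (Equiv.refl (Fin m))) *
        (A * ((1 : Matrix (Fin n) (Fin n) F).submatrix (Equiv.refl (Fin n)) en)) := by
    rw [Matrix.mul_submatrix_one, Matrix.one_submatrix_mul, Matrix.submatrix_submatrix]
    rfl
  have hle : min m n ≤ A.rank := by
    rw [← hrank_sub, hfactor]
    calc Matrix.rank _ ≤ (A * ((1 : Matrix (Fin n) (Fin n) F).submatrix (Equiv.refl (Fin n))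
        en)).rank := Matrix.rank_mul_le_right _ _
    _ ≤ A.rank := Matrix.rank_mul_le_left _ _
  exact le_antisymm (le_min (Matrix.rank_le_height A) (Matrix.rank_le_width A)) hle
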